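/- With c(0,i,j) as above and c_{(1,5)} := Σ_{i=1}^{4} c(0,i,i+1), under the edge identifications Δ'(1,2) = Δ'(4,3), Δ'(2,1) = Δ'(3,4), Δ'(2,3) = Δ'(5,4), Δ'(3,2) = Δ'(4,5), one has: ∂_0 c_{(1,5)} = 2Δ'(0,1) − 2Δ'(0,5) − Δ'(1,0) + Δ'(5,0), ∂_1 c_{(1,5)} = −Δ'(0,1) + Δ'(0,5) + Δ'(1,0) − Δ'(5,0), ∂_2 c_{(1,5)} = Δ'(0,1) − Δ'(0,5) − 2Δ'(1,0) + 2Δ'(5,0). -/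

import Mathlib

/-- With `c(0,i,j) := Δ'(0,i,j) + Δ'(i,j,0) + 2Δ'(j,0,i) − Δ'(j,i,0) − Δ'(0,j,i) − 2Δ'(i,0,j)`
and `c_{(1,5)} := Σ_{i=1}^{4} c(0,i,i+1)`, under the edge identifications
`Δ'(1,2)=Δ'(4,3)`, `Δ'(2,1)=Δ'(3,4)`, `Δ'(2,3)=Δ'(5,4)`, `Δ'(3,2)=Δ'(4,5)` of the
building block `K`, the three simplicial boundaries of `c_{(1,5)}` are as stated. -/
theorem stmt15 {M2 M1 : Type*}
    [AddCommGroup M2] [Module ℝ M2] [AddCommGroup M1] [Module ℝ M1]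
    (D0 D1 D2 : M2 →ₗ[ℝ] M1)
    (Δ2 : ℕ → ℕ → ℕ → M2) (Δ1 : ℕ → ℕ → M1)
    (h0 : ∀ a b c, D0 (Δ2 a b c) = Δ1 b c)
    (h1 : ∀ a b c, D1 (Δ2 a b c) = Δ1 a c)
    (h2 : ∀ a b c, D2 (Δ2 a b c) = Δ1 a b)
    (e1 : Δ1 1 2 = Δ1 4 3) (e2 : Δ1 2 1 = Δ1 3 4)
    (e3 : Δ1 2 3 = Δ1 5 4) (e4 : Δ1 3 2 = Δ1 4 5)
    (c : ℕ → ℕ → ℕ → M2)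
    (hc : ∀ o i j, c o i j =
      Δ2 o i j + Δ2 i j o + (2:ℝ) • Δ2 j o i - Δ2 j i o - Δ2 o j i - (2:ℝ) • Δ2 i o j)
    (c15 : M2) (hc15 : c15 = ∑ i ∈ Finset.Icc 1 4, c 0 i (i + 1)) :
    (D0 c15 = (2:ℝ) • Δ1 0 1 - (2:ℝ) • Δ1 0 5 - Δ1 1 0 + Δ1 5 0) ∧
    (D1 c15 = -Δ1 0 1 + Δ1 0 5 + Δ1 1 0 - Δ1 5 0) ∧
    (D2 c15 = Δ1 0 1 - Δ1 0 5 - (2:ℝ) • Δ1 1 0 + (2:ℝ) • Δ1 5 0) := by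
  subst hc15
  have hIcc : Finset.Icc 1 4 = ({1,2,3,4} : Finset ℕ) := by decide
  rw [hIcc]
  simp only [Finset.sum_insert, Finset.mem_insert, Finset.mem_singleton,
    Finset.sum_singleton, hc]
  norm_num
  refine ⟨?_, ?_, ?_⟩ <;>
  · simp only [map_add, map_sub, map_smul, h0, h1, h2, e1, e2, e3, e4]
    module
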